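/- Consider a fully homogeneous BNPG on a finite simple graph G with common externality function g such that Δg is strictly increasing (g strictly convex) and common cost c. Suppose {m ∈ ℕ : c ≤ Δg(m)} is nonempty with least element k, and that k ≥ 1. Let S be a nonempty set of vertices that is maximal with respect to the property that every vertex of S has at least k neighbors in S (i.e., S is the nonempty k-core of G). Then the action profile in which exactly the players in S invest is a PSNE; in particular, if S ≠ V it is a non-trivial PSNE. -/
import Mathlib


/-- Finite difference `Δg(m) = g(m+1) − g(m)`. -/
def Δg (g : ℕ → ℝ) (m : ℕ) : ℝ := g (m + 1) - g m

/-- Number of investing neighbors of player `i` under profile `x` in graph `G`. -/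
noncomputable def nInv {V : Type*} (G : SimpleGraph V) (x : V → Bool) (i : V) : ℕ :=
  {j | G.Adj i j ∧ x j = true}.ncard

/-- Pure-strategy Nash equilibrium of the BNPG on `G` with externalities `g` and costs `c`. -/
def IsPSNE {V : Type*} (G : SimpleGraph V) (g : V → ℕ → ℝ) (c : V → ℝ)
    (x : V → Bool) : Prop :=
  ∀ i, (x i = true → c i ≤ Δg (g i) (nInv G x i)) ∧
       (x i = false → Δg (g i) (nInv G x i) ≤ c i)


/-- fully homogeneous BNPG with strictly convex `g`; suppose
`{m : c ≤ Δg(m)}` is nonempty with least element `k ≥ 1`, and `S` is a nonempty set of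
vertices, maximal with respect to the property that every vertex of `S` has at least `k`
neighbors in `S` (the nonempty `k`-core).  Then the profile investing exactly on `S` is a
PSNE; in particular if `S ≠ V` it is a non-trivial PSNE. -/
theorem stmt12 {V : Type*} [Fintype V] (G : SimpleGraph V)
    (g : ℕ → ℝ) (hmono : Monotone g) (hconv : StrictMono (Δg g)) (c : ℝ)
    (hne : {m : ℕ | c ≤ Δg g m}.Nonempty)
    (k : ℕ) (hk : k = sInf {m : ℕ | c ≤ Δg g m}) (hk1 : 1 ≤ k)
    (S : Set V) (hS : S.Nonempty)
    (hdeg : ∀ i ∈ S, k ≤ {j | G.Adj i j ∧ j ∈ S}.ncard)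
    (hmax : ∀ T : Set V, S ⊆ T → (∀ i ∈ T, k ≤ {j | G.Adj i j ∧ j ∈ T}.ncard) → T = S)
    (x : V → Bool) (hx : ∀ i, x i = true ↔ i ∈ S) :
    IsPSNE G (fun _ => g) (fun _ => c) x ∧
    (S ≠ Set.univ → x ≠ (fun _ => false) ∧ x ≠ (fun _ => true)) := by
  have hkmem : c ≤ Δg g k := by
    have := Nat.sInf_mem hne
    rw [← hk] at this
    exact this
  have hset : ∀ i, {j | G.Adj i j ∧ x j = true} = {j | G.Adj i j ∧ j ∈ S} := by
    intro i
    ext j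
    simp [hx j]
  have hnInv : ∀ i, nInv G x i = {j | G.Adj i j ∧ j ∈ S}.ncard := by
    intro i; rw [nInv, hset]
  constructor
  · intro i
    constructor
    · intro hi
      rw [hx] at hi
      have hki : k ≤ nInv G x i := by rw [hnInv]; exact hdeg i hi
      calc c ≤ Δg g k := hkmem
        _ ≤ Δg g (nInv G x i) := hconv.monotone hki
    · intro hi
      have hiS : i ∉ S := by
        intro h; rw [← hx] at h; rw [hi] at h; exact Bool.false_ne_true h
      -- show nInv G x i < k
      have hlt : nInv G x i < k := by
        by_contra hge
        push_neg at hge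
        have hge' : k ≤ {j | G.Adj i j ∧ j ∈ S}.ncard := by rwa [hnInv] at hge
        have hT : insert i S = S := by
          apply hmax
          · exact Set.subset_insert i S
          · intro u hu
            rcases hu with hu | hu
            · subst hu
              refine hge'.trans (Set.ncard_le_ncard ?_ (Set.toFinite _))
              intro j hj
              exact ⟨hj.1, Set.mem_insert_of_mem _ hj.2⟩
            · refine (hdeg u hu).trans (Set.ncard_le_ncard ?_ (Set.toFinite _))
              intro j hj
              exact ⟨hj.1, Set.mem_insert_of_mem _ hj.2⟩
        exact hiS (hT ▸ Set.mem_insert i S)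
      have : nInv G x i ∉ {m : ℕ | c ≤ Δg g m} := by
        rw [hk] at hlt
        exact Nat.notMem_of_lt_sInf hlt
      simpa using le_of_lt (lt_of_not_ge this)
  · intro hSV
    constructor
    · intro hxf
      obtain ⟨i, hi⟩ := hS
      have : x i = true := (hx i).mpr hi
      rw [hxf] at this
      exact Bool.false_ne_true this
    · intro hxt
      obtain ⟨i, hi⟩ : ∃ i, i ∉ S := by
        by_contra h
        push_neg at h
        exact hSV (Set.eq_univ_of_forall h)
      have : x i = true := by rw [hxt]
      exact hi ((hx i).mp this)
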